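/- If P(z) is a polynomial of degree n with all zeros in |z| ≤ k, k ≤ 1, then for every complex number α with |α| ≥ k, n·(|α| − k)·max_{|z|=1}|P(z)| ≤ (1+k)·max_{|z|=1}|D_α P(z)|, where D_α P(z) = nP(z) + (α − z)P'(z). -/

import Mathlib

open Polynomial Metric Complex Real


lemma sum_ineq (c : ℝ) (hc : 0 ≤ c) (S : Multiset ℂ)
    (h : ∀ w ∈ S, c * ‖w‖^2 ≤ 2 * w.re - 1) :
    c * ‖S.sum‖^2 ≤ 2 * S.card * S.sum.re - (S.card : ℝ)^2 := by
  induction S using Multiset.induction with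
  | empty => simp
  | cons w T ih =>
    have hw : c * ‖w‖^2 ≤ 2 * w.re - 1 := h w (Multiset.mem_cons_self _ _)
    have hW : c * ‖T.sum‖^2 ≤ 2 * T.card * T.sum.re - (T.card : ℝ)^2 :=
      ih (fun x hx => h x (Multiset.mem_cons_of_mem hx))
    set W := T.sum with hWdef
    set m : ℝ := (T.card : ℝ) with hmdef
    have hm0 : 0 ≤ m := Nat.cast_nonneg _
    simp only [Multiset.sum_cons, Multiset.card_cons, Nat.cast_add, Nat.cast_one,
      Complex.add_re]
    have htri : ‖w + W‖ ≤ ‖w‖ + ‖W‖ := norm_add_le _ _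
    have h1 : c * ‖w + W‖^2 ≤ c * (‖w‖ + ‖W‖)^2 :=
      mul_le_mul_of_nonneg_left (pow_le_pow_left₀ (norm_nonneg _) htri 2) hc
    have ha0 : (0:ℝ) ≤ 2 * m * W.re - m^2 := le_trans (by positivity) hW
    have hb0 : (0:ℝ) ≤ 2 * w.re - 1 := le_trans (by positivity) hw
    have hprod : (c * ‖W‖^2) * (c * ‖w‖^2) ≤ (2 * m * W.re - m^2) * (2 * w.re - 1) :=
      mul_le_mul hW hw (by positivity) ha0
    have hx0 : 0 ≤ 2 * m * (c * (‖W‖ * ‖w‖)) := by positivity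
    have hy0 : 0 ≤ (2 * m * W.re - m^2) + m^2 * (2 * w.re - 1) := by positivity
    have hsq : (2 * m * (c * (‖W‖ * ‖w‖)))^2 ≤ ((2 * m * W.re - m^2) + m^2 * (2 * w.re - 1))^2 := by
      nlinarith [sq_nonneg ((2 * m * W.re - m^2) - m^2 * (2 * w.re - 1)),
        mul_le_mul_of_nonneg_left hprod (by positivity : (0:ℝ) ≤ 4*m^2)]
    have key : 2 * m * (c * (‖W‖ * ‖w‖)) ≤ (2 * m * W.re - m^2) + m^2 * (2 * w.re - 1) :=
      (pow_le_pow_iff_left₀ hx0 hy0 (by norm_num)).mp hsq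
    by_cases hm : m = 0
    · have hT : T.card = 0 := by exact_mod_cast hmdef ▸ hm
      have : T = 0 := Multiset.card_eq_zero.mp hT
      subst this
      simp only [Multiset.sum_zero, Multiset.card_zero] at *
      simpa using hw
    · have hm1 : 0 < m := lt_of_le_of_ne hm0 (Ne.symm hm)
      nlinarith [h1, hW, hw, key, hm1, sq_nonneg (‖w‖ + ‖W‖), mul_nonneg hc (sq_nonneg (‖w‖+‖W‖))]


lemma keyId (z : ℂ) (S : Multiset ℂ) (hS : ∀ r ∈ S, z - r ≠ 0) :
    (S.map (fun r => z / (z - r))).sum * eval z (S.map (fun r => X - C r)).prod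
      = z * eval z (derivative (S.map (fun r => X - C r)).prod) := by
  induction S using Multiset.induction with
  | empty => simp
  | cons r T ih =>
    have hr : z - r ≠ 0 := hS r (Multiset.mem_cons_self _ _)
    have ihT := ih (fun x hx => hS x (Multiset.mem_cons_of_mem hx))
    simp only [Multiset.map_cons, Multiset.sum_cons, Multiset.prod_cons, derivative_mul,
      derivative_X_sub_C, eval_mul, eval_add, eval_sub, eval_X, eval_C, eval_one, one_mul]
    have hc : z / (z - r) * (z - r) = z := div_mul_cancel₀ z hr
    linear_combination eval z (Multiset.map (fun r => X - C r) T).prod * hc + (z - r) * ihT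


lemma norm_sq_expand (u : ℂ) : ‖u‖^2 = u.re^2 + u.im^2 := by
  rw [Complex.sq_norm, Complex.normSq_apply]; ring

lemma elem_bound (k : ℝ) (hk1 : k ≤ 1) (z r : ℂ) (hz : ‖z‖ = 1) (hr : ‖r‖ ≤ k)
    (hzr : z - r ≠ 0) :
    (1 - k^2) * ‖z / (z - r)‖^2 ≤ 2 * (z / (z - r)).re - 1 := by
  set w := z / (z - r) with hw
  have h1 : w - 1 = r / (z - r) := by
    field_simp [hw]
    rw [hw, sub_mul, div_mul_cancel₀ _ hzr]; ring
  have h2 : ‖w - 1‖ ≤ k * ‖w‖ := by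
    rw [h1, hw, norm_div, norm_div, hz]
    rw [div_le_iff₀ (norm_pos_iff.mpr hzr)]
    calc ‖r‖ ≤ k := hr
    _ = k * (1 / ‖z - r‖) * ‖z - r‖ := by
          have h : ‖z - r‖ ≠ 0 := norm_ne_zero_iff.mpr hzr
          field_simp
  have h3 : ‖w - 1‖^2 ≤ k^2 * ‖w‖^2 := by
    have := pow_le_pow_left₀ (norm_nonneg _) h2 2
    calc ‖w - 1‖^2 ≤ (k * ‖w‖)^2 := this
    _ = k^2 * ‖w‖^2 := by ring
  have hid : ‖w - 1‖^2 = ‖w‖^2 - 2 * w.re + 1 := by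
    rw [norm_sq_expand, norm_sq_expand]
    simp [Complex.sub_re, Complex.sub_im]
    ring
  linarith

lemma pointwise (P : Polynomial ℂ) (n : ℕ) (hn : 1 ≤ n) (hdeg : P.natDegree = n)
    (k : ℝ) (hk0 : 0 < k) (hk1 : k ≤ 1)
    (hroots : ∀ z : ℂ, P.eval z = 0 → ‖z‖ ≤ k)
    (α : ℂ) (hα : k ≤ ‖α‖) (z : ℂ) (hz : ‖z‖ = 1) :
    (n : ℝ) * (‖α‖ - k) * ‖P.eval z‖ ≤
      (1 + k) * ‖(n : ℂ) * P.eval z + (α - z) * P.derivative.eval z‖ := by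
  by_cases hPz : P.eval z = 0
  · rw [hPz, norm_zero, mul_zero]
    have : (0:ℝ) ≤ 1 + k := by linarith
    positivity
  have hP0 : P ≠ 0 := fun h => by simp [h] at hPz
  have hsplits : P.Splits := IsAlgClosed.splits P
  have hcard : P.roots.card = n := by
    rw [← hdeg]; exact Polynomial.splits_iff_card_roots.mp hsplits
  have hfact : P = C P.leadingCoeff * (P.roots.map fun a => X - C a).prod :=
    hsplits.eq_prod_roots
  have hroot_ne : ∀ r ∈ P.roots, z - r ≠ 0 := by
    intro r hr h
    exact hPz (by rw [sub_eq_zero.mp h]; exact isRoot_of_mem_roots hr)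
  set W : ℂ := (P.roots.map (fun r => z / (z - r))).sum with hWdef
  -- identity W * P(z) = z * P'(z)
  have hWid : W * P.eval z = z * P.derivative.eval z := by
    have hk := keyId z P.roots hroot_ne
    have hd : P.derivative = C P.leadingCoeff * derivative (P.roots.map fun a => X - C a).prod := by
      conv_lhs => rw [hfact]
      rw [derivative_mul, derivative_C, zero_mul, zero_add]
    calc W * P.eval z
        = P.leadingCoeff * ((P.roots.map (fun r => z / (z - r))).sum *
            eval z (P.roots.map (fun a => X - C a)).prod) := by
          conv_lhs => rw [hfact]
          simp [eval_mul]; ring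
      _ = P.leadingCoeff * (z * eval z (derivative (P.roots.map fun a => X - C a).prod)) := by
          rw [hk]
      _ = z * P.derivative.eval z := by rw [hd]; simp [eval_mul]; ring
  -- sum inequality
  have hsum : (1 - k^2) * ‖W‖^2 ≤ 2 * n * W.re - (n:ℝ)^2 := by
    have hc : (0:ℝ) ≤ 1 - k^2 := by nlinarith
    have h := sum_ineq (1 - k^2) hc (P.roots.map (fun r => z / (z - r))) ?_
    · rwa [← hWdef, Multiset.card_map, hcard] at h
    · intro w hw
      obtain ⟨r, hr, rfl⟩ := Multiset.mem_map.mp hw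
      exact elem_bound k hk1 z r hz (hroots r (isRoot_of_mem_roots hr)) (hroot_ne r hr)
  -- basic quantities
  have hp0 : 0 < ‖P.eval z‖ := norm_pos_iff.mpr hPz
  have hWre : W.re ≤ ‖W‖ := Complex.re_le_norm W
  have hW0 : 0 ≤ ‖W‖ := norm_nonneg _
  have hn1 : (1:ℝ) ≤ n := by exact_mod_cast hn
  -- lemma A : n ≤ (1+k) ‖W‖
  have hA : (n:ℝ) ≤ (1 + k) * ‖W‖ := by
    by_contra hcon
    push_neg at hcon
    have h1 : (0:ℝ) < (n:ℝ) - (1 + k) * ‖W‖ := by linarith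
    have h2 : (0:ℝ) < (n:ℝ) - (1 - k) * ‖W‖ := by nlinarith
    nlinarith [mul_pos h1 h2, hsum, hWre, hn1]
  -- lemma B : ‖n - W‖ ≤ k ‖W‖
  have hB : ‖(n:ℂ) - W‖ ≤ k * ‖W‖ := by
    have hsq : ‖(n:ℂ) - W‖^2 ≤ (k * ‖W‖)^2 := by
      rw [norm_sq_expand]
      have h1 : ((n:ℂ) - W).re = (n:ℝ) - W.re := by simp
      have h2 : ((n:ℂ) - W).im = -W.im := by simp
      rw [h1, h2]
      have h3 : ‖W‖^2 = W.re^2 + W.im^2 := norm_sq_expand W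
      nlinarith [hsum]
    exact (pow_le_pow_iff_left₀ (norm_nonneg _) (by positivity) (by norm_num)).mp hsq
  -- combine
  have hnorm : ‖W‖ * ‖P.eval z‖ = ‖P.derivative.eval z‖ := by
    have : ‖W * P.eval z‖ = ‖z * P.derivative.eval z‖ := by rw [hWid]
    rwa [norm_mul, norm_mul, hz, one_mul] at this
  have heq : (n:ℂ) * P.eval z + (α - z) * P.derivative.eval z
      = α * P.derivative.eval z - (W - (n:ℂ)) * P.eval z := by
    linear_combination hWid
  have hB' : ‖(W - (n:ℂ)) * P.eval z‖ ≤ k * ‖W‖ * ‖P.eval z‖ := by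
    rw [norm_mul, norm_sub_rev]
    exact mul_le_mul_of_nonneg_right hB (norm_nonneg _)
  have hND : ‖α‖ * ‖P.derivative.eval z‖ - k * ‖W‖ * ‖P.eval z‖
      ≤ ‖(n:ℂ) * P.eval z + (α - z) * P.derivative.eval z‖ := by
    rw [heq]
    calc ‖α‖ * ‖P.derivative.eval z‖ - k * ‖W‖ * ‖P.eval z‖
        ≤ ‖α * P.derivative.eval z‖ - ‖(W - (n:ℂ)) * P.eval z‖ := by
          rw [norm_mul]; linarith [hB']
      _ ≤ ‖α * P.derivative.eval z - (W - (n:ℂ)) * P.eval z‖ := norm_sub_norm_le _ _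
  rw [← hnorm] at hND
  have hαk : 0 ≤ ‖α‖ - k := by linarith
  have hkey : (n:ℝ) * ((‖α‖ - k) * ‖P.eval z‖) ≤ (1 + k) * ‖W‖ * ((‖α‖ - k) * ‖P.eval z‖) :=
    mul_le_mul_of_nonneg_right hA (mul_nonneg hαk hp0.le)
  nlinarith [hND, hnorm, hkey, hp0.le, hαk, hW0, norm_nonneg (eval z (derivative P)),
    mul_le_mul_of_nonneg_left hND (by linarith : (0:ℝ) ≤ 1 + k)]

theorem stmt5 (P : Polynomial ℂ) (n : ℕ) (hn : 1 ≤ n) (hdeg : P.natDegree = n)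
    (k : ℝ) (hk0 : 0 < k) (hk1 : k ≤ 1)
    (hroots : ∀ z : ℂ, P.eval z = 0 → ‖z‖ ≤ k)
    (α : ℂ) (hα : k ≤ ‖α‖)
    : (n : ℝ) * (‖α‖ - k) * (⨆ z : sphere (0:ℂ) 1, ‖P.eval ↑z‖) ≤ (1 + k) * (⨆ z : sphere (0:ℂ) 1, ‖((n : ℂ) * P.eval ↑z + (α - ↑z) * P.derivative.eval ↑z)‖) := by
  haveI : Nonempty (sphere (0:ℂ) 1) := ⟨⟨1, by simp⟩⟩
  have hzs : ∀ z : sphere (0:ℂ) 1, ‖(z:ℂ)‖ = 1 := by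
    intro z
    have := z.2
    simpa [mem_sphere_iff_norm] using this
  set f : sphere (0:ℂ) 1 → ℝ := fun z => ‖(n : ℂ) * P.eval ↑z + (α - ↑z) * P.derivative.eval ↑z‖ with hf
  have hfc : Continuous f := by fun_prop
  have hbdd : BddAbove (Set.range f) := (isCompact_range hfc).bddAbove
  set M' : ℝ := ⨆ z : sphere (0:ℂ) 1, f z with hM'
  have hle : ∀ z : sphere (0:ℂ) 1, f z ≤ M' := fun z => le_ciSup hbdd z
  have hM'0 : 0 ≤ M' := le_trans (norm_nonneg _) (hle ⟨1, by simp⟩)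
  have hpt : ∀ z : sphere (0:ℂ) 1,
      (n : ℝ) * (‖α‖ - k) * ‖P.eval ↑z‖ ≤ (1 + k) * M' := by
    intro z
    exact le_trans (pointwise P n hn hdeg k hk0 hk1 hroots α hα z (hzs z))
      (mul_le_mul_of_nonneg_left (hle z) (by linarith))
  by_cases hαk : ‖α‖ = k
  · rw [hαk, sub_self, mul_zero, zero_mul]
    positivity
  · have hα' : 0 < ‖α‖ - k := lt_of_le_of_ne (by linarith) (fun h => hαk (by linarith))
    have hc0 : 0 < (n : ℝ) * (‖α‖ - k) := by
      have : (1:ℝ) ≤ n := by exact_mod_cast hn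
      positivity
    have hsup : (⨆ z : sphere (0:ℂ) 1, ‖P.eval ↑z‖) ≤ (1 + k) * M' / ((n : ℝ) * (‖α‖ - k)) := by
      apply ciSup_le
      intro z
      rw [le_div_iff₀ hc0]
      calc ‖P.eval ↑z‖ * ((n:ℝ) * (‖α‖ - k)) = (n : ℝ) * (‖α‖ - k) * ‖P.eval ↑z‖ := by ring
        _ ≤ (1 + k) * M' := hpt z
    calc (n : ℝ) * (‖α‖ - k) * (⨆ z : sphere (0:ℂ) 1, ‖P.eval ↑z‖)
        ≤ (n : ℝ) * (‖α‖ - k) * ((1 + k) * M' / ((n : ℝ) * (‖α‖ - k))) :=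
          mul_le_mul_of_nonneg_left hsup hc0.le
      _ = (1 + k) * M' := by
            rw [mul_div_assoc']
            exact mul_div_cancel_left₀ _ hc0.ne'
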